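/- Let S = {1,…,N} be a finite set and let a₁, α : S → ℝ with a₁(i) > 0 for all i. Let μ be a probability measure on S with ∑_{i∈S} μ(i)·(a₁(i) − α(i)²/2) > 0. Then there exist ε > 0 and r₀ > 0 such that ∑_{i∈S} μ(i)·(a₁(i) − α(i)²/2 − ε) > 0 and for every i ∈ S: (i) for all x > r₀, 2·(a₁(i) − α(i)²/2 − b₁(i)·e^x + α(i)²/(2x))·x ≤ −2·(a₁(i) − α(i)²/2 − ε)·|x|, and (ii) for all x < −r₀, 2·(a₁(i) − α(i)²/2 − b₁(i)·e^x + α(i)²/(2x))·x ≤ −2·(a₁(i) − α(i)²/2 − ε)·|x|, where b₁ : S → (0,∞). -/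

import Mathlib

open Real Finset

/-- Asymptotic drift estimate used to build the Lyapunov function for the
log-transformed regime-switching logistic process. -/
theorem drift_estimate
    (N : ℕ) (hN : 0 < N)
    (a₁ α b₁ : Fin N → ℝ) (μ : Fin N → ℝ)
    (ha₁ : ∀ i, 0 < a₁ i) (hb₁ : ∀ i, 0 < b₁ i)
    (hμnonneg : ∀ i, 0 ≤ μ i) (hμsum : ∑ i, μ i = 1)
    (hmean : 0 < ∑ i, μ i * (a₁ i - (α i) ^ 2 / 2)) :
    ∃ ε > (0:ℝ), ∃ r₀ > (0:ℝ),
      0 < ∑ i, μ i * (a₁ i - (α i) ^ 2 / 2 - ε) ∧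
      (∀ i, ∀ x > r₀,
        2 * (a₁ i - (α i) ^ 2 / 2 - b₁ i * Real.exp x + (α i) ^ 2 / (2 * x)) * x
          ≤ -2 * (a₁ i - (α i) ^ 2 / 2 - ε) * |x|) ∧
      (∀ i, ∀ x < -r₀,
        2 * (a₁ i - (α i) ^ 2 / 2 - b₁ i * Real.exp x + (α i) ^ 2 / (2 * x)) * x
          ≤ -2 * (a₁ i - (α i) ^ 2 / 2 - ε) * |x|) := by
  set M := ∑ i, μ i * (a₁ i - (α i) ^ 2 / 2) with hM
  set ε := M / 2 with hε
  have hεpos : 0 < ε := by positivity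
  set f : Fin N → ℝ := fun j =>
    |(2 * (a₁ j - (α j) ^ 2 / 2) - ε + (α j) ^ 2 / 2) / b₁ j| + (b₁ j + (α j) ^ 2 / 2) / ε
    with hf
  have hfnonneg : ∀ j ∈ Finset.univ, 0 ≤ f j := by
    intro j _
    have := hεpos
    have := hb₁ j
    positivity
  set r₀ := 1 + ∑ j, f j with hr₀
  have hsumnn : 0 ≤ ∑ j, f j := Finset.sum_nonneg hfnonneg
  have hr₀pos : 0 < r₀ := by simp only [hr₀]; linarith
  have hterm : ∀ i : Fin N, f i ≤ ∑ j, f j :=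
    fun i => Finset.single_le_sum hfnonneg (Finset.mem_univ i)
  refine ⟨ε, hεpos, r₀, hr₀pos, ?_, ?_, ?_⟩
  · have hsum : ∑ i, μ i * (a₁ i - (α i) ^ 2 / 2 - ε) = M - ε := by
      have h1 : ∀ i ∈ Finset.univ, μ i * (a₁ i - (α i) ^ 2 / 2 - ε)
          = μ i * (a₁ i - (α i) ^ 2 / 2) - ε * μ i := fun i _ => by ring
      rw [Finset.sum_congr rfl h1, Finset.sum_sub_distrib, ← Finset.mul_sum, hμsum,
        mul_one, hM]
    rw [hsum]
    simp only [hε]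
    linarith
  · intro i x hx
    have hfi := hterm i
    have hx1 : 1 < x := by
      have : (1:ℝ) ≤ r₀ := by simp only [hr₀]; linarith
      linarith
    have hx0 : 0 < x := by linarith
    have hxC : |(2 * (a₁ i - (α i) ^ 2 / 2) - ε + (α i) ^ 2 / 2) / b₁ i| < x := by
      have h1 : f i ≤ r₀ - 1 := by simp only [hr₀]; linarith
      have h2 : 0 ≤ (b₁ i + (α i) ^ 2 / 2) / ε := by have := hb₁ i; positivity
      simp only [hf] at h1
      linarith
    have hbC : 2 * (a₁ i - (α i) ^ 2 / 2) - ε + (α i) ^ 2 / 2 < b₁ i * x := by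
      have h := lt_of_le_of_lt (le_abs_self _) hxC
      rw [div_lt_iff₀ (hb₁ i)] at h
      linarith [h]
    have hexpand : 2 * (a₁ i - (α i) ^ 2 / 2 - b₁ i * Real.exp x + (α i) ^ 2 / (2 * x)) * x
        = 2 * (a₁ i - (α i) ^ 2 / 2) * x - 2 * b₁ i * Real.exp x * x + (α i) ^ 2 := by
      field_simp
    rw [abs_of_pos hx0, hexpand]
    have hexp : x + 1 ≤ Real.exp x := Real.add_one_le_exp x
    have hb := hb₁ i
    nlinarith [mul_pos hb hx0, mul_pos hx0 hx0, sq_nonneg (α i),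
      mul_le_mul_of_nonneg_right hexp (le_of_lt hx0),
      mul_lt_mul_of_pos_right hbC hx0]
  · intro i x hx
    have hfi := hterm i
    have hxneg : x < 0 := by linarith
    have hy : -x > r₀ := by linarith
    have hy0 : 0 < -x := by linarith
    have hDle : (b₁ i + (α i) ^ 2 / 2) / ε ≤ r₀ := by
      have h2 : 0 ≤ |(2 * (a₁ i - (α i) ^ 2 / 2) - ε + (α i) ^ 2 / 2) / b₁ i| := abs_nonneg _
      simp only [hf] at hfi
      simp only [hr₀]
      linarith
    have hεy : b₁ i + (α i) ^ 2 / 2 < ε * (-x) := by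
      have := (div_le_iff₀ hεpos).mp hDle
      nlinarith [mul_lt_mul_of_pos_left hy hεpos]
    have hxne : x ≠ 0 := ne_of_lt hxneg
    have hme : Real.exp x * Real.exp (-x) = 1 := by
      rw [← Real.exp_add]; simp
    have hexp : -x + 1 ≤ Real.exp (-x) := Real.add_one_le_exp (-x)
    have hey : Real.exp x * (-x) ≤ 1 := by
      nlinarith [Real.exp_pos x, mul_le_mul_of_nonneg_left hexp (le_of_lt (Real.exp_pos x))]
    have hexpand : 2 * (a₁ i - (α i) ^ 2 / 2 - b₁ i * Real.exp x + (α i) ^ 2 / (2 * x)) * x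
        = 2 * (a₁ i - (α i) ^ 2 / 2) * x - 2 * b₁ i * Real.exp x * x + (α i) ^ 2 := by
      field_simp [hxne]
    rw [abs_of_neg hxneg, hexpand]
    have hb := hb₁ i
    nlinarith [mul_le_mul_of_nonneg_left hey (le_of_lt hb)]
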